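/- Fix ΔV > 0, a threshold offset c ∈ ℝ, and let φ(z) = (√(2π))⁻¹·exp(−z²/2) be the standard normal density. If |c| < σ₁ < σ₂, then ΔV·(1/σ₂)·φ(c/σ₂) < ΔV·(1/σ₁)·φ(c/σ₁); that is, whenever the noise level exceeds the distance |V_th − V − μ| to threshold (so that z² < 1), the approximated flipping-probability sensitivity ΔV·(1/σ)·φ((V_th − V − μ)/σ) is strictly decreasing in σ. Hence increasing the Gaussian noise level σ reduces the sensitivity of the Noisy-LIF flipping probability to small membrane-potential perturbations. -/

import Mathlib

/-- `φ` is the standard normal probability density function. -/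
noncomputable def stdGaussianPDF (z : ℝ) : ℝ :=
  (Real.sqrt (2 * Real.pi))⁻¹ * Real.exp (-z ^ 2 / 2)

private lemma aux_strictAnti (c : ℝ) :
    StrictAntiOn (fun σ : ℝ => σ⁻¹ * Real.exp (-c ^ 2 / (2 * σ ^ 2))) (Set.Ioi |c|) := by
  have habs : (0:ℝ) ≤ |c| := abs_nonneg c
  have hderiv : ∀ σ ∈ Set.Ioi |c|,
      HasDerivAt (fun σ : ℝ => σ⁻¹ * Real.exp (-c ^ 2 / (2 * σ ^ 2)))
        (σ⁻¹ ^ 2 * Real.exp (-c ^ 2 / (2 * σ ^ 2)) * (c ^ 2 / σ ^ 2 - 1)) σ := by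
    intro σ hσ
    have hσ0 : σ ≠ 0 := by
      have : 0 < σ := lt_of_le_of_lt habs hσ
      exact this.ne'
    have hu : HasDerivAt (fun σ : ℝ => -c ^ 2 / (2 * σ ^ 2)) (c ^ 2 / σ ^ 3) σ := by
      have h1 : HasDerivAt (fun σ : ℝ => 2 * σ ^ 2) (2 * (2 * σ)) σ := by
        simpa using ((hasDerivAt_pow 2 σ).const_mul 2)
      have := ((hasDerivAt_const σ (-c ^ 2)).div h1 (by positivity))
      rw [Pi.div_def] at this
      refine this.congr_deriv ?_
      field_simp
      ring
    have hexp := hu.exp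
    have hinv : HasDerivAt (fun σ : ℝ => σ⁻¹) (-(σ ^ 2)⁻¹) σ := by
      simpa using hasDerivAt_inv hσ0
    have := hinv.mul hexp
    rw [Pi.mul_def] at this
    refine this.congr_deriv ?_
    field_simp
    ring
  have hcont : ContinuousOn (fun σ : ℝ => σ⁻¹ * Real.exp (-c ^ 2 / (2 * σ ^ 2)))
      (Set.Ici |c| ∩ Set.Ioi |c|) := by
    intro σ hσ
    exact ((hderiv σ hσ.2).continuousAt).continuousWithinAt
  apply strictAntiOn_of_hasDerivWithinAt_neg (f := fun σ : ℝ => σ⁻¹ * Real.exp (-c ^ 2 / (2 * σ ^ 2)))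
      (f' := fun σ => σ⁻¹ ^ 2 * Real.exp (-c ^ 2 / (2 * σ ^ 2)) * (c ^ 2 / σ ^ 2 - 1))
      (convex_Ioi _)
      (fun σ hσ => ((hderiv σ hσ).continuousAt).continuousWithinAt)
      (fun σ hσ => ((hderiv σ (by simpa [interior_Ioi] using hσ)).hasDerivWithinAt))
  intro σ hσ
  rw [interior_Ioi] at hσ
  have hσpos : 0 < σ := lt_of_le_of_lt habs hσ
  have hlt : c ^ 2 < σ ^ 2 := by
    nlinarith [sq_abs c, habs, Set.mem_Ioi.mp hσ]
  have h1 : c ^ 2 / σ ^ 2 - 1 < 0 := by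
    rw [sub_neg, div_lt_one (by positivity)]; exact hlt
  have h2 : 0 < σ⁻¹ ^ 2 * Real.exp (-c ^ 2 / (2 * σ ^ 2)) := by positivity
  exact mul_neg_of_pos_of_neg h2 h1

/-- When the noise level exceeds the distance `|c| = |V_th − V − μ|` to threshold (so `z² < 1`),
the approximated flipping-probability sensitivity `ΔV·(1/σ)·φ(c/σ)` is strictly decreasing
in `σ`: increasing the Gaussian noise level reduces the sensitivity of the Noisy-LIF flipping
probability to small membrane-potential perturbations. -/
theorem flipping_sensitivity_strict_anti (ΔV c : ℝ) (hΔV : 0 < ΔV)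
    (σ₁ σ₂ : ℝ) (h₁ : |c| < σ₁) (h₂ : σ₁ < σ₂) :
    ΔV * (1 / σ₂) * stdGaussianPDF (c / σ₂) < ΔV * (1 / σ₁) * stdGaussianPDF (c / σ₁) := by
  have habs : (0:ℝ) ≤ |c| := abs_nonneg c
  have hσ₁ : 0 < σ₁ := lt_of_le_of_lt habs h₁
  have hσ₂ : 0 < σ₂ := hσ₁.trans h₂
  have key := aux_strictAnti c (Set.mem_Ioi.2 h₁) (Set.mem_Ioi.2 (h₁.trans h₂)) h₂
  have hC : 0 < (Real.sqrt (2 * Real.pi))⁻¹ := by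
    have : 0 < Real.sqrt (2 * Real.pi) := Real.sqrt_pos.2 (by positivity)
    positivity
  have e1 : -(c / σ₁) ^ 2 / 2 = -c ^ 2 / (2 * σ₁ ^ 2) := by field_simp
  have e2 : -(c / σ₂) ^ 2 / 2 = -c ^ 2 / (2 * σ₂ ^ 2) := by field_simp
  simp only [stdGaussianPDF, e1, e2]
  have := mul_lt_mul_of_pos_left key (mul_pos hΔV hC)
  calc ΔV * (1 / σ₂) * ((Real.sqrt (2 * Real.pi))⁻¹ * Real.exp (-c ^ 2 / (2 * σ₂ ^ 2)))
      = ΔV * (Real.sqrt (2 * Real.pi))⁻¹ * (σ₂⁻¹ * Real.exp (-c ^ 2 / (2 * σ₂ ^ 2))) := by ring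
    _ < ΔV * (Real.sqrt (2 * Real.pi))⁻¹ * (σ₁⁻¹ * Real.exp (-c ^ 2 / (2 * σ₁ ^ 2))) := this
    _ = ΔV * (1 / σ₁) * ((Real.sqrt (2 * Real.pi))⁻¹ * Real.exp (-c ^ 2 / (2 * σ₁ ^ 2))) := by ring
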